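/- arXiv:2408.14193 — 3 statements merged into one kernel-verified Lean document; each statement's English description precedes it below -/
import Mathlib

section
/- Let A and B be n×n Hermitian complex matrices, and for a Hermitian matrix M let λ₁(M) ≥ λ₂(M) ≥ … ≥ λ_n(M) denote its eigenvalues in decreasing order. Then for every k, λ_k(A) + λ_n(B) ≤ λ_k(A+B) ≤ λ_k(A) + λ₁(B) (Weyl's inequality); consequently |λ_k(A+B) − λ_k(A)| ≤ ‖B‖ for every k, where ‖·‖ is the ℓ²-operator norm. -/
open Matrix
open scoped Matrix.Norms.L2Operator

noncomputable section

variable {n : ℕ}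

local notation "⟪" x ", " y "⟫" => @inner ℂ _ _ x y

/-- quadratic form in terms of an eigenbasis -/
lemma quad_sum (T : EuclideanSpace ℂ (Fin n) →ₗ[ℂ] EuclideanSpace ℂ (Fin n))
    (u : OrthonormalBasis (Fin n) ℂ (EuclideanSpace ℂ (Fin n))) (a : Fin n → ℝ)
    (hu : ∀ i, T (u i) = (a i : ℂ) • u i) (x : EuclideanSpace ℂ (Fin n)) :
    Complex.re ⟪x, T x⟫ = ∑ i, a i * ‖u.repr x i‖ ^ 2 := by
  have hTx : T x = ∑ i, ((a i : ℂ) * u.repr x i) • u i := by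
    conv_lhs => rw [← u.sum_repr x]
    rw [map_sum]
    refine Finset.sum_congr rfl fun i _ => ?_
    rw [_root_.map_smul, hu i, smul_smul, mul_comm]
  rw [hTx, inner_sum]
  simp_rw [inner_smul_right]
  rw [Complex.re_sum]
  refine Finset.sum_congr rfl fun i _ => ?_
  have h1 : ⟪x, u i⟫ = starRingEnd ℂ (u.repr x i) := by
    rw [u.repr_apply_apply, inner_conj_symm]
  rw [h1, mul_assoc, Complex.mul_conj]
  norm_cast
  rw [← Complex.sq_norm]

lemma norm_sq_sum (u : OrthonormalBasis (Fin n) ℂ (EuclideanSpace ℂ (Fin n)))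
    (x : EuclideanSpace ℂ (Fin n)) :
    ‖x‖ ^ 2 = ∑ i, ‖u.repr x i‖ ^ 2 := by
  have := quad_sum (LinearMap.id) u (fun _ => 1) (fun i => by simp) x
  simpa [← inner_self_eq_norm_sq (𝕜 := ℂ) x] using this

lemma repr_zero_of_mem_span (u : OrthonormalBasis (Fin n) ℂ (EuclideanSpace ℂ (Fin n)))
    {s : Set (Fin n)} {x : EuclideanSpace ℂ (Fin n)}
    (hx : x ∈ Submodule.span ℂ (u '' s)) {j : Fin n} (hj : j ∉ s) :
    u.repr x j = 0 := by
  rw [u.repr_apply_apply]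
  induction hx using Submodule.span_induction with
  | mem y hy =>
      obtain ⟨i, hi, rfl⟩ := hy
      exact u.orthonormal.2 (fun h => hj (h ▸ hi))
  | zero => simp
  | add y z hy hz ihy ihz => rw [inner_add_right, ihy, ihz, add_zero]
  | smul c y hy ihy => rw [inner_smul_right, ihy, mul_zero]

lemma weyl_aux (T S : EuclideanSpace ℂ (Fin n) →ₗ[ℂ] EuclideanSpace ℂ (Fin n))
    (u v : OrthonormalBasis (Fin n) ℂ (EuclideanSpace ℂ (Fin n))) (a c : Fin n → ℝ)
    (ha : Antitone a) (hc : Antitone c)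
    (hu : ∀ i, T (u i) = (a i : ℂ) • u i)
    (hv : ∀ i, T (v i) + S (v i) = (c i : ℂ) • v i)
    (m : ℝ) (hm : ∀ x : EuclideanSpace ℂ (Fin n), m * ‖x‖ ^ 2 ≤ Complex.re ⟪x, S x⟫)
    (k : Fin n) : a k + m ≤ c k := by
  classical
  set U := Submodule.span ℂ (u '' {i | i ≤ k}) with hU
  set W := Submodule.span ℂ (v '' {i | k ≤ i}) with hW
  have hfu : Module.finrank ℂ U = (k : ℕ) + 1 := by
    have himg : u '' {i | i ≤ k} = Set.range (fun i : Set.Iic k => u i) := by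
      ext y; simp [Set.range, Set.mem_image]
    have hli : LinearIndependent ℂ (fun i : Set.Iic k => u i) :=
      u.orthonormal.linearIndependent.comp _ Subtype.val_injective
    rw [hU, himg, finrank_span_eq_card hli, Fintype.card_Iic, Fin.card_Iic]
  have hfv : Module.finrank ℂ W = n - (k : ℕ) := by
    have himg : v '' {i | k ≤ i} = Set.range (fun i : Set.Ici k => v i) := by
      ext y; simp [Set.range, Set.mem_image]
    have hli : LinearIndependent ℂ (fun i : Set.Ici k => v i) :=
      v.orthonormal.linearIndependent.comp _ Subtype.val_injective
    rw [hW, himg, finrank_span_eq_card hli, Fintype.card_Ici, Fin.card_Ici]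
  have htot : Module.finrank ℂ (EuclideanSpace ℂ (Fin n)) = n := finrank_euclideanSpace_fin
  have hsum := Submodule.finrank_sup_add_finrank_inf_eq U W
  have hle : Module.finrank ℂ ↥(U ⊔ W) ≤ n := le_trans (Submodule.finrank_le _) (le_of_eq htot)
  have hpos : 0 < Module.finrank ℂ ↥(U ⊓ W) := by
    have := k.isLt; omega
  have hne : U ⊓ W ≠ ⊥ := by
    intro h; rw [h, finrank_bot] at hpos; omega
  obtain ⟨x, hxmem, hx0⟩ := Submodule.exists_mem_ne_zero_of_ne_bot hne
  have hxU : x ∈ U := hxmem.1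
  have hxW : x ∈ W := hxmem.2
  have hx2 : (0:ℝ) < ‖x‖ ^ 2 := pow_pos (norm_pos_iff.mpr hx0) 2
  -- lower bound on ⟪x, T x⟫
  have hlow : a k * ‖x‖ ^ 2 ≤ Complex.re ⟪x, T x⟫ := by
    rw [quad_sum T u a hu x, norm_sq_sum u x, Finset.mul_sum]
    refine Finset.sum_le_sum fun i _ => ?_
    by_cases hik : i ≤ k
    · exact mul_le_mul_of_nonneg_right (ha hik) (by positivity)
    · rw [repr_zero_of_mem_span u hxU hik]; simp
  -- upper bound on ⟪x, (T+S) x⟫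
  have hupp : Complex.re ⟪x, T x + S x⟫ ≤ c k * ‖x‖ ^ 2 := by
    have hq := quad_sum (T + S) v c (fun i => by simpa using hv i) x
    simp only [LinearMap.add_apply] at hq
    rw [hq, norm_sq_sum v x, Finset.mul_sum]
    refine Finset.sum_le_sum fun i _ => ?_
    by_cases hik : k ≤ i
    · exact mul_le_mul_of_nonneg_right (hc hik) (by positivity)
    · rw [repr_zero_of_mem_span v hxW hik]; simp
  have hsplit : Complex.re ⟪x, T x + S x⟫ = Complex.re ⟪x, T x⟫ + Complex.re ⟪x, S x⟫ := by
    rw [inner_add_right]; simp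
  have : (a k + m) * ‖x‖ ^ 2 ≤ c k * ‖x‖ ^ 2 := by
    calc (a k + m) * ‖x‖ ^ 2 = a k * ‖x‖ ^ 2 + m * ‖x‖ ^ 2 := by ring
    _ ≤ Complex.re ⟪x, T x⟫ + Complex.re ⟪x, S x⟫ := add_le_add hlow (hm x)
    _ = Complex.re ⟪x, T x + S x⟫ := hsplit.symm
    _ ≤ c k * ‖x‖ ^ 2 := hupp
  exact le_of_mul_le_mul_right this hx2


lemma eig_apply {M : Matrix (Fin n) (Fin n) ℂ} (hM : M.IsHermitian) (σ : Equiv.Perm (Fin n))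
    (i : Fin n) :
    Matrix.toEuclideanLin M ((hM.eigenvectorBasis.reindex σ.symm) i)
      = ((hM.eigenvalues (σ i) : ℂ)) • (hM.eigenvectorBasis.reindex σ.symm) i := by
  apply (WithLp.equiv 2 (Fin n → ℂ)).injective
  simp only [OrthonormalBasis.reindex_apply, Equiv.symm_symm, WithLp.equiv_apply, ofLp_toEuclideanLin_apply]
  have h := hM.mulVec_eigenvectorBasis (σ i)
  rw [h]
  funext j
  simp [Complex.real_smul]

/-- Rayleigh lower bound from the smallest eigenvalue. -/
lemma rayleigh_bounds {M : Matrix (Fin n) (Fin n) ℂ} (hM : M.IsHermitian)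
    (b : Fin n → ℝ) (σ : Equiv.Perm (Fin n)) (hb : b = hM.eigenvalues ∘ σ)
    [Nonempty (Fin n)] (x : EuclideanSpace ℂ (Fin n)) :
    (⨅ i, b i) * ‖x‖ ^ 2 ≤ Complex.re ⟪x, Matrix.toEuclideanLin M x⟫ ∧
      Complex.re ⟪x, Matrix.toEuclideanLin M x⟫ ≤ (⨆ i, b i) * ‖x‖ ^ 2 := by
  set w := hM.eigenvectorBasis.reindex σ.symm
  have hw : ∀ i, Matrix.toEuclideanLin M (w i) = ((b i : ℂ)) • w i := by
    intro i; rw [hb]; exact eig_apply hM σ i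
  rw [quad_sum _ w b hw x, norm_sq_sum w x, Finset.mul_sum, Finset.mul_sum]
  constructor
  · refine Finset.sum_le_sum fun i _ => ?_
    exact mul_le_mul_of_nonneg_right
      (ciInf_le (Set.Finite.bddBelow (Set.finite_range b)) i) (by positivity)
  · refine Finset.sum_le_sum fun i _ => ?_
    exact mul_le_mul_of_nonneg_right
      (le_ciSup (Set.Finite.bddAbove (Set.finite_range b)) i) (by positivity)

lemma eig_abs_le_norm {M : Matrix (Fin n) (Fin n) ℂ} (hM : M.IsHermitian) (i : Fin n) :
    |hM.eigenvalues i| ≤ ‖M‖ := by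
  have hmv := hM.mulVec_eigenvectorBasis i
  have hnorm1 : ‖hM.eigenvectorBasis i‖ = 1 := hM.eigenvectorBasis.orthonormal.1 i
  have h : ‖(EuclideanSpace.equiv (Fin n) ℂ).symm
      (hM.eigenvalues i • ⇑(hM.eigenvectorBasis i))‖ ≤ ‖M‖ * ‖hM.eigenvectorBasis i‖ := by
    rw [← hmv]; exact M.l2_opNorm_mulVec (hM.eigenvectorBasis i)
  have heq : (EuclideanSpace.equiv (Fin n) ℂ).symm (hM.eigenvalues i • ⇑(hM.eigenvectorBasis i))
      = hM.eigenvalues i • hM.eigenvectorBasis i := rfl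
  rw [heq, norm_smul, Real.norm_eq_abs, hnorm1, mul_one, mul_one] at h
  exact h

/-- Weyl's inequality: Let `A`, `B` be `n×n` Hermitian complex matrices, and
let `a`, `b`, `c` be the eigenvalues of `A`, `B`, `A+B` respectively, arranged in decreasing
order (`a k = λ_{k+1}(A)`, etc.; each is an antitone rearrangement of the Mathlib eigenvalue
function). Then for every `k`,
`λ_k(A) + λ_n(B) ≤ λ_k(A+B) ≤ λ_k(A) + λ₁(B)`, where `λ_n(B) = ⨅ i, b i` and
`λ₁(B) = ⨆ i, b i`; consequently `|λ_k(A+B) - λ_k(A)| ≤ ‖B‖` (ℓ²-operator norm). -/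
theorem stmt6 (n : ℕ) (A B : Matrix (Fin n) (Fin n) ℂ)
    (hA : A.IsHermitian) (hB : B.IsHermitian) (hAB : (A + B).IsHermitian)
    (a b c : Fin n → ℝ)
    (ha₁ : Antitone a) (ha₂ : ∃ σ : Equiv.Perm (Fin n), a = hA.eigenvalues ∘ σ)
    (hb₁ : Antitone b) (hb₂ : ∃ σ : Equiv.Perm (Fin n), b = hB.eigenvalues ∘ σ)
    (hc₁ : Antitone c) (hc₂ : ∃ σ : Equiv.Perm (Fin n), c = hAB.eigenvalues ∘ σ) :
    ∀ k : Fin n,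
      (a k + ⨅ i, b i ≤ c k) ∧ (c k ≤ a k + ⨆ i, b i) ∧ |c k - a k| ≤ ‖B‖ := by
  intro k
  haveI : Nonempty (Fin n) := ⟨k⟩
  obtain ⟨σA, haσ⟩ := ha₂
  obtain ⟨σB, hbσ⟩ := hb₂
  obtain ⟨σC, hcσ⟩ := hc₂
  set u := hA.eigenvectorBasis.reindex σA.symm with hu_def
  set v := hAB.eigenvectorBasis.reindex σC.symm with hv_def
  have hu : ∀ i, Matrix.toEuclideanLin A (u i) = ((a i : ℂ)) • u i := by
    intro i; rw [haσ]; exact eig_apply hA σA i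
  have hv : ∀ i, Matrix.toEuclideanLin (A + B) (v i) = ((c i : ℂ)) • v i := by
    intro i; rw [hcσ]; exact eig_apply hAB σC i
  have hadd : Matrix.toEuclideanLin (A + B)
      = Matrix.toEuclideanLin A + Matrix.toEuclideanLin B := map_add _ _ _
  have hneg : Matrix.toEuclideanLin (-B) = - Matrix.toEuclideanLin B := map_neg _ _
  have hRay := fun x : EuclideanSpace ℂ (Fin n) => rayleigh_bounds hB b σB hbσ x
  have h1 : a k + ⨅ i, b i ≤ c k := by
    refine weyl_aux (Matrix.toEuclideanLin A) (Matrix.toEuclideanLin B) u v a c ha₁ hc₁ hu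
      (fun i => ?_) _ (fun x => (hRay x).1) k
    have h := hv i
    rw [hadd] at h
    simpa using h
  have h2 : c k ≤ a k + ⨆ i, b i := by
    have hmB : ∀ x : EuclideanSpace ℂ (Fin n),
        (-(⨆ i, b i)) * ‖x‖ ^ 2 ≤ Complex.re ⟪x, Matrix.toEuclideanLin (-B) x⟫ := by
      intro x
      have h := (hRay x).2
      rw [hneg]
      simp only [LinearMap.neg_apply, inner_neg_right, Complex.neg_re]
      linarith
    have hu' : ∀ i, Matrix.toEuclideanLin (A + B) (u i) + Matrix.toEuclideanLin (-B) (u i)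
        = ((a i : ℂ)) • u i := by
      intro i
      rw [hadd, hneg]
      simp only [LinearMap.add_apply, LinearMap.neg_apply]
      rw [← hu i]
      abel
    have := weyl_aux (Matrix.toEuclideanLin (A + B)) (Matrix.toEuclideanLin (-B)) v u c a
      hc₁ ha₁ hv hu' _ hmB k
    linarith
  have habs : ∀ i, |b i| ≤ ‖B‖ := by
    intro i; rw [hbσ]; exact eig_abs_le_norm hB (σB i)
  obtain ⟨i₁, hi₁⟩ := Finite.exists_max b
  obtain ⟨i₂, hi₂⟩ := Finite.exists_min b
  have hsup : (⨆ i, b i) = b i₁ :=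
    le_antisymm (ciSup_le hi₁) (le_ciSup (Set.Finite.bddAbove (Set.finite_range b)) i₁)
  have hinf : (⨅ i, b i) = b i₂ :=
    le_antisymm (ciInf_le (Set.Finite.bddBelow (Set.finite_range b)) i₂) (le_ciInf hi₂)
  refine ⟨h1, h2, abs_le.mpr ⟨?_, ?_⟩⟩
  · have := habs i₂
    have h3 := neg_abs_le (b i₂)
    rw [hinf] at h1
    linarith
  · have := habs i₁
    have h3 := le_abs_self (b i₁)
    rw [hsup] at h2
    linarith

end
end

section
/- Let A₀ ∈ ℂ^{N×N}, let ε ≥ 0, and for l = 1,…,L let U_l, V_l ∈ ℂ^{N×N} be invertible matrices with ‖U_l^{−1}‖ ≤ 1+u_l and ‖V_l^{−1}‖ ≤ 1+v_l (u_l, v_l ≥ 0), and let A_l ∈ ℂ^{N×N} satisfy A_l = U_l A_{l−1} V_l + E_l with ‖E_l‖ ≤ ε. Then the accumulated error of the recursive two-sided factorization satisfies ‖A₀ − (U₁^{−1}U₂^{−1}⋯U_L^{−1}) A_L (V_L^{−1}⋯V₂^{−1}V₁^{−1})‖ ≤ ε · Σ_{l=1}^{L} Π_{j=1}^{l} (1+u_j)(1+v_j),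 which in particular is at most ε·L·Π_{j=1}^{L}(1+u_j)(1+v_j). -/
open Matrix
open scoped Matrix.Norms.L2Operator

lemma l2_norm_one_le (N : ℕ) : ‖(1 : Matrix (Fin N) (Fin N) ℂ)‖ ≤ 1 := by
  rw [Matrix.l2_opNorm_def]
  have h : (Matrix.toEuclideanLin ≪≫ₗ LinearMap.toContinuousLinearMap)
      (1 : Matrix (Fin N) (Fin N) ℂ) = ContinuousLinearMap.id ℂ _ := by
    ext x
    simp [Matrix.toEuclideanLin_eq_toLin, Matrix.toLin_one]
  rw [h]
  exact ContinuousLinearMap.norm_id_le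

lemma PU_bound (N : ℕ) (U : ℕ → Matrix (Fin N) (Fin N) ℂ) (u : ℕ → ℝ) :
    ∀ L : ℕ, (∀ l ∈ Finset.Icc 1 L, 0 ≤ u l) →
    (∀ l ∈ Finset.Icc 1 L, ‖(U l)⁻¹‖ ≤ 1 + u l) →
    ‖((List.range L).map fun i => (U (i + 1))⁻¹).prod‖ ≤ ∏ j ∈ Finset.Icc 1 L, (1 + u j) := by
  intro L
  induction L with
  | zero => intro _ _; simpa using l2_norm_one_le N
  | succ L ih =>
    intro hu hUinv
    have hsub : Finset.Icc 1 L ⊆ Finset.Icc 1 (L + 1) :=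
      Finset.Icc_subset_Icc_right (Nat.le_succ L)
    have ih' := ih (fun l hl => hu l (hsub hl)) (fun l hl => hUinv l (hsub hl))
    rw [List.range_succ, List.map_append, List.prod_append, List.map_singleton,
      List.prod_singleton, Finset.prod_Icc_succ_top (Nat.succ_le_succ (Nat.zero_le L))]
    calc ‖((List.range L).map fun i => (U (i + 1))⁻¹).prod * (U (L + 1))⁻¹‖
        ≤ ‖((List.range L).map fun i => (U (i + 1))⁻¹).prod‖ * ‖(U (L + 1))⁻¹‖ :=
          Matrix.l2_opNorm_mul _ _
      _ ≤ (∏ j ∈ Finset.Icc 1 L, (1 + u j)) * (1 + u (L + 1)) := by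
          apply mul_le_mul ih' (hUinv (L + 1) (by simp)) (norm_nonneg _)
          exact Finset.prod_nonneg fun j hj => by linarith [hu j (hsub hj)]

lemma QV_bound (N : ℕ) (V : ℕ → Matrix (Fin N) (Fin N) ℂ) (v : ℕ → ℝ) :
    ∀ L : ℕ, (∀ l ∈ Finset.Icc 1 L, 0 ≤ v l) →
    (∀ l ∈ Finset.Icc 1 L, ‖(V l)⁻¹‖ ≤ 1 + v l) →
    ‖((List.range L).map fun i => (V (L - i))⁻¹).prod‖ ≤ ∏ j ∈ Finset.Icc 1 L, (1 + v j) := by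
  intro L
  induction L with
  | zero => intro _ _; simpa using l2_norm_one_le N
  | succ L ih =>
    intro hv hVinv
    have hsub : Finset.Icc 1 L ⊆ Finset.Icc 1 (L + 1) :=
      Finset.Icc_subset_Icc_right (Nat.le_succ L)
    have ih' := ih (fun l hl => hv l (hsub hl)) (fun l hl => hVinv l (hsub hl))
    have hlist : ((List.range (L + 1)).map fun i => (V (L + 1 - i))⁻¹) =
        (V (L + 1))⁻¹ :: ((List.range L).map fun i => (V (L - i))⁻¹) := by
      rw [List.range_succ_eq_map, List.map_cons, List.map_map]
      simp
    rw [hlist, List.prod_cons, Finset.prod_Icc_succ_top (Nat.succ_le_succ (Nat.zero_le L))]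
    calc ‖(V (L + 1))⁻¹ * ((List.range L).map fun i => (V (L - i))⁻¹).prod‖
        ≤ ‖(V (L + 1))⁻¹‖ * ‖((List.range L).map fun i => (V (L - i))⁻¹).prod‖ :=
          Matrix.l2_opNorm_mul _ _
      _ ≤ (1 + v (L + 1)) * ∏ j ∈ Finset.Icc 1 L, (1 + v j) := by
          apply mul_le_mul (hVinv (L + 1) (by simp)) ih' (norm_nonneg _)
          linarith [hv (L + 1) (by simp : L + 1 ∈ Finset.Icc 1 (L + 1))]
      _ = (∏ j ∈ Finset.Icc 1 L, (1 + v j)) * (1 + v (L + 1)) := mul_comm _ _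

lemma main_aux (N : ℕ) (ε : ℝ) (hε : 0 ≤ ε)
    (A U V E : ℕ → Matrix (Fin N) (Fin N) ℂ) (u v : ℕ → ℝ) :
    ∀ L : ℕ,
    (∀ l ∈ Finset.Icc 1 L, 0 ≤ u l) →
    (∀ l ∈ Finset.Icc 1 L, 0 ≤ v l) →
    (∀ l ∈ Finset.Icc 1 L, IsUnit (U l)) →
    (∀ l ∈ Finset.Icc 1 L, IsUnit (V l)) →
    (∀ l ∈ Finset.Icc 1 L, ‖(U l)⁻¹‖ ≤ 1 + u l) →
    (∀ l ∈ Finset.Icc 1 L, ‖(V l)⁻¹‖ ≤ 1 + v l) →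
    (∀ l ∈ Finset.Icc 1 L, A l = U l * A (l - 1) * V l + E l) →
    (∀ l ∈ Finset.Icc 1 L, ‖E l‖ ≤ ε) →
    ‖A 0 - ((List.range L).map fun i => (U (i + 1))⁻¹).prod * A L *
        ((List.range L).map fun i => (V (L - i))⁻¹).prod‖ ≤
      ε * ∑ l ∈ Finset.Icc 1 L, ∏ j ∈ Finset.Icc 1 l, (1 + u j) * (1 + v j) := by
  intro L
  induction L with
  | zero => intro _ _ _ _ _ _ _ _; simp
  | succ L ih =>
    intro hu hv hUunit hVunit hUinv hVinv hrec hE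
    have hsub : Finset.Icc 1 L ⊆ Finset.Icc 1 (L + 1) :=
      Finset.Icc_subset_Icc_right (Nat.le_succ L)
    have ih' := ih (fun l hl => hu l (hsub hl)) (fun l hl => hv l (hsub hl))
      (fun l hl => hUunit l (hsub hl)) (fun l hl => hVunit l (hsub hl))
      (fun l hl => hUinv l (hsub hl)) (fun l hl => hVinv l (hsub hl))
      (fun l hl => hrec l (hsub hl)) (fun l hl => hE l (hsub hl))
    have hmem : L + 1 ∈ Finset.Icc 1 (L + 1) := by simp
    set PU := ((List.range L).map fun i => (U (i + 1))⁻¹).prod with hPU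
    set QV := ((List.range L).map fun i => (V (L - i))⁻¹).prod with hQV
    have hPU' : ((List.range (L + 1)).map fun i => (U (i + 1))⁻¹).prod = PU * (U (L + 1))⁻¹ := by
      rw [hPU, List.range_succ, List.map_append, List.prod_append, List.map_singleton,
        List.prod_singleton]
    have hQV' : ((List.range (L + 1)).map fun i => (V (L + 1 - i))⁻¹).prod =
        (V (L + 1))⁻¹ * QV := by
      rw [hQV, List.range_succ_eq_map, List.map_cons, List.map_map, List.prod_cons]
      congr 2
      exact List.map_congr_left fun a _ => by simp [Nat.succ_sub_succ]
    have hdetU : IsUnit (U (L + 1)).det := (Matrix.isUnit_iff_isUnit_det _).mp (hUunit _ hmem)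
    have hdetV : IsUnit (V (L + 1)).det := (Matrix.isUnit_iff_isUnit_det _).mp (hVunit _ hmem)
    have hAL : A (L + 1) = U (L + 1) * A L * V (L + 1) + E (L + 1) := by
      simpa using hrec (L + 1) hmem
    have h1 : (U (L + 1))⁻¹ * A (L + 1) * (V (L + 1))⁻¹ =
        A L + (U (L + 1))⁻¹ * E (L + 1) * (V (L + 1))⁻¹ := by
      rw [hAL, Matrix.mul_add, Matrix.add_mul]
      congr 1
      calc (U (L + 1))⁻¹ * (U (L + 1) * A L * V (L + 1)) * (V (L + 1))⁻¹
          = ((U (L + 1))⁻¹ * U (L + 1)) * A L * (V (L + 1) * (V (L + 1))⁻¹) := by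
            noncomm_ring
        _ = A L := by rw [Matrix.nonsing_inv_mul _ hdetU, Matrix.mul_nonsing_inv _ hdetV,
            one_mul, mul_one]
    have hkey : A 0 - (PU * (U (L + 1))⁻¹) * A (L + 1) * ((V (L + 1))⁻¹ * QV) =
        (A 0 - PU * A L * QV) - PU * ((U (L + 1))⁻¹ * E (L + 1) * (V (L + 1))⁻¹) * QV := by
      have : (PU * (U (L + 1))⁻¹) * A (L + 1) * ((V (L + 1))⁻¹ * QV) =
          PU * ((U (L + 1))⁻¹ * A (L + 1) * (V (L + 1))⁻¹) * QV := by noncomm_ring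
      rw [this, h1]
      noncomm_ring
    have hPUb : ‖PU‖ ≤ ∏ j ∈ Finset.Icc 1 L, (1 + u j) :=
      PU_bound N U u L (fun l hl => hu l (hsub hl)) (fun l hl => hUinv l (hsub hl))
    have hQVb : ‖QV‖ ≤ ∏ j ∈ Finset.Icc 1 L, (1 + v j) :=
      QV_bound N V v L (fun l hl => hv l (hsub hl)) (fun l hl => hVinv l (hsub hl))
    have hmidb : ‖(U (L + 1))⁻¹ * E (L + 1) * (V (L + 1))⁻¹‖ ≤
        (1 + u (L + 1)) * ε * (1 + v (L + 1)) := by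
      calc ‖(U (L + 1))⁻¹ * E (L + 1) * (V (L + 1))⁻¹‖
          ≤ ‖(U (L + 1))⁻¹ * E (L + 1)‖ * ‖(V (L + 1))⁻¹‖ := Matrix.l2_opNorm_mul _ _
        _ ≤ ‖(U (L + 1))⁻¹‖ * ‖E (L + 1)‖ * ‖(V (L + 1))⁻¹‖ := by
            apply mul_le_mul_of_nonneg_right (Matrix.l2_opNorm_mul _ _) (norm_nonneg _)
        _ ≤ (1 + u (L + 1)) * ε * (1 + v (L + 1)) := by
            apply mul_le_mul _ (hVinv _ hmem) (norm_nonneg _)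
            · apply mul_nonneg (by linarith [hu _ hmem]) hε
            · apply mul_le_mul (hUinv _ hmem) (hE _ hmem) (norm_nonneg _)
                (by linarith [hu _ hmem])
    have hPUnn : (0:ℝ) ≤ ∏ j ∈ Finset.Icc 1 L, (1 + u j) :=
      Finset.prod_nonneg fun j hj => by linarith [hu j (hsub hj)]
    have hQVnn : (0:ℝ) ≤ ∏ j ∈ Finset.Icc 1 L, (1 + v j) :=
      Finset.prod_nonneg fun j hj => by linarith [hv j (hsub hj)]
    have hterm : ‖PU * ((U (L + 1))⁻¹ * E (L + 1) * (V (L + 1))⁻¹) * QV‖ ≤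
        ε * ∏ j ∈ Finset.Icc 1 (L + 1), (1 + u j) * (1 + v j) := by
      calc ‖PU * ((U (L + 1))⁻¹ * E (L + 1) * (V (L + 1))⁻¹) * QV‖
          ≤ ‖PU * ((U (L + 1))⁻¹ * E (L + 1) * (V (L + 1))⁻¹)‖ * ‖QV‖ :=
            Matrix.l2_opNorm_mul _ _
        _ ≤ ‖PU‖ * ‖(U (L + 1))⁻¹ * E (L + 1) * (V (L + 1))⁻¹‖ * ‖QV‖ :=
            mul_le_mul_of_nonneg_right (Matrix.l2_opNorm_mul _ _) (norm_nonneg _)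
        _ ≤ (∏ j ∈ Finset.Icc 1 L, (1 + u j)) * ((1 + u (L + 1)) * ε * (1 + v (L + 1))) *
            (∏ j ∈ Finset.Icc 1 L, (1 + v j)) := by
            apply mul_le_mul _ hQVb (norm_nonneg _)
            · apply mul_nonneg hPUnn
              apply mul_nonneg (mul_nonneg (by linarith [hu _ hmem]) hε)
                (by linarith [hv _ hmem])
            · exact mul_le_mul hPUb hmidb (norm_nonneg _) hPUnn
        _ = ε * ∏ j ∈ Finset.Icc 1 (L + 1), (1 + u j) * (1 + v j) := by
            rw [Finset.prod_Icc_succ_top (Nat.succ_le_succ (Nat.zero_le L)),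
              Finset.prod_mul_distrib]
            ring
    calc ‖A 0 - ((List.range (L + 1)).map fun i => (U (i + 1))⁻¹).prod * A (L + 1) *
          ((List.range (L + 1)).map fun i => (V (L + 1 - i))⁻¹).prod‖
        = ‖(A 0 - PU * A L * QV) -
            PU * ((U (L + 1))⁻¹ * E (L + 1) * (V (L + 1))⁻¹) * QV‖ := by
          rw [hPU', hQV', hkey]
      _ ≤ ‖A 0 - PU * A L * QV‖ +
            ‖PU * ((U (L + 1))⁻¹ * E (L + 1) * (V (L + 1))⁻¹) * QV‖ := norm_sub_le _ _
      _ ≤ ε * (∑ l ∈ Finset.Icc 1 L, ∏ j ∈ Finset.Icc 1 l, (1 + u j) * (1 + v j)) +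
            ε * ∏ j ∈ Finset.Icc 1 (L + 1), (1 + u j) * (1 + v j) := add_le_add ih' hterm
      _ = ε * ∑ l ∈ Finset.Icc 1 (L + 1), ∏ j ∈ Finset.Icc 1 l, (1 + u j) * (1 + v j) := by
          rw [Finset.sum_Icc_succ_top (Nat.succ_le_succ (Nat.zero_le L))]
          ring

/-- Let `A 0 : ℂ^{N×N}`, `ε ≥ 0`, and for `l = 1,…,L` let `U l`, `V l` be
invertible with `‖(U l)⁻¹‖ ≤ 1 + u l`, `‖(V l)⁻¹‖ ≤ 1 + v l` (`u l, v l ≥ 0`), and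
`A l = U l · A (l-1) · V l + E l` with `‖E l‖ ≤ ε`. Then
`‖A 0 - (U₁⁻¹⋯U_L⁻¹) · A L · (V_L⁻¹⋯V₁⁻¹)‖ ≤ ε · Σ_{l=1}^{L} Π_{j=1}^{l} (1+u_j)(1+v_j)`,
and this bound is at most `ε · L · Π_{j=1}^{L} (1+u_j)(1+v_j)` (ℓ²-operator norms). -/
theorem stmt7 (N L : ℕ) (ε : ℝ) (hε : 0 ≤ ε)
    (A U V E : ℕ → Matrix (Fin N) (Fin N) ℂ)
    (u v : ℕ → ℝ)
    (hu : ∀ l ∈ Finset.Icc 1 L, 0 ≤ u l)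
    (hv : ∀ l ∈ Finset.Icc 1 L, 0 ≤ v l)
    (hUunit : ∀ l ∈ Finset.Icc 1 L, IsUnit (U l))
    (hVunit : ∀ l ∈ Finset.Icc 1 L, IsUnit (V l))
    (hUinv : ∀ l ∈ Finset.Icc 1 L, ‖(U l)⁻¹‖ ≤ 1 + u l)
    (hVinv : ∀ l ∈ Finset.Icc 1 L, ‖(V l)⁻¹‖ ≤ 1 + v l)
    (hrec : ∀ l ∈ Finset.Icc 1 L, A l = U l * A (l - 1) * V l + E l)
    (hE : ∀ l ∈ Finset.Icc 1 L, ‖E l‖ ≤ ε) :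
    ‖A 0 - ((List.range L).map fun i => (U (i + 1))⁻¹).prod * A L *
        ((List.range L).map fun i => (V (L - i))⁻¹).prod‖ ≤
      ε * ∑ l ∈ Finset.Icc 1 L, ∏ j ∈ Finset.Icc 1 l, (1 + u j) * (1 + v j) ∧
    ε * ∑ l ∈ Finset.Icc 1 L, ∏ j ∈ Finset.Icc 1 l, (1 + u j) * (1 + v j) ≤
      ε * L * ∏ j ∈ Finset.Icc 1 L, (1 + u j) * (1 + v j) := by
  constructor
  · exact main_aux N ε hε A U V E u v L hu hv hUunit hVunit hUinv hVinv hrec hE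
  · have hone : ∀ j ∈ Finset.Icc 1 L, (1:ℝ) ≤ (1 + u j) * (1 + v j) := fun j hj => by
      nlinarith [hu j hj, hv j hj]
    have hmono : ∀ l ∈ Finset.Icc 1 L,
        ∏ j ∈ Finset.Icc 1 l, (1 + u j) * (1 + v j) ≤
          ∏ j ∈ Finset.Icc 1 L, (1 + u j) * (1 + v j) := by
      intro l hl
      have hsub : Finset.Icc 1 l ⊆ Finset.Icc 1 L :=
        Finset.Icc_subset_Icc_right (Finset.mem_Icc.mp hl).2
      rw [← Finset.prod_sdiff hsub]
      have h1 : (1:ℝ) ≤ ∏ j ∈ Finset.Icc 1 L \ Finset.Icc 1 l, (1 + u j) * (1 + v j) := by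
        calc (1:ℝ) = ∏ j ∈ Finset.Icc 1 L \ Finset.Icc 1 l, 1 := by simp
          _ ≤ _ := Finset.prod_le_prod (fun j hj => zero_le_one)
              (fun j hj => hone j (Finset.mem_sdiff.mp hj).1)
      have h0 : (0:ℝ) ≤ ∏ j ∈ Finset.Icc 1 l, (1 + u j) * (1 + v j) :=
        Finset.prod_nonneg fun j hj => by nlinarith [hu j (hsub hj), hv j (hsub hj)]
      exact le_mul_of_one_le_left h0 h1
    have hsum : ∑ l ∈ Finset.Icc 1 L, ∏ j ∈ Finset.Icc 1 l, (1 + u j) * (1 + v j) ≤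
        L * ∏ j ∈ Finset.Icc 1 L, (1 + u j) * (1 + v j) := by
      have := Finset.sum_le_card_nsmul (Finset.Icc 1 L)
        (fun l => ∏ j ∈ Finset.Icc 1 l, (1 + u j) * (1 + v j))
        (∏ j ∈ Finset.Icc 1 L, (1 + u j) * (1 + v j)) hmono
      simpa [Nat.card_Icc, nsmul_eq_mul] using this
    calc ε * ∑ l ∈ Finset.Icc 1 L, ∏ j ∈ Finset.Icc 1 l, (1 + u j) * (1 + v j)
        ≤ ε * (L * ∏ j ∈ Finset.Icc 1 L, (1 + u j) * (1 + v j)) :=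
          mul_le_mul_of_nonneg_left hsum hε
      _ = ε * L * ∏ j ∈ Finset.Icc 1 L, (1 + u j) * (1 + v j) := by ring
end

section
/- Let 0 < q < 2^{−1/3}, σ ≥ 0, M ≥ 0. Then there exists a constant C, depending only on q, σ, and M, such that for every positive integer L and every sequence of nonnegative reals e_L, e_{L−1}, …, e_1 satisfying e_L ≤ M and the two-level sparsity recurrences e_{L−2i} ≤ 2q·e_{L−2i+2} + 2σ and e_{L−2i+1} ≤ e_{L−2i} for all admissible i ≥ 1 (with e_{L−1} ≤ e_{L−2} likewise), it holds that Σ_{l=1}^{L} 2^{l}·(e_l)³ ≤ C·2^{L} and Σ_{l=1}^{L} 2^{l}·(e_l)² ≤ C·2^{L}. -/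
private lemma geom_aux (r : ℝ) (hr0 : 0 ≤ r) (hr1 : r < 1) (n : ℕ) :
    ∑ j ∈ Finset.range n, r ^ j ≤ (1 - r)⁻¹ := by
  have h1 : (0:ℝ) < 1 - r := by linarith
  rw [geom_sum_eq (by linarith)]
  rw [div_le_iff_of_neg (by linarith : r - 1 < 0)]
  have : (0:ℝ) ≤ r ^ n := pow_nonneg hr0 n
  have h2 : (1 - r)⁻¹ * (1 - r) = 1 := inv_mul_cancel₀ (ne_of_gt h1)
  nlinarith [inv_nonneg.mpr h1.le]

private lemma sum_aux (u : ℝ) (hu0 : 0 ≤ u) (hu2 : u < 2) (L : ℕ) :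
    ∑ l ∈ Finset.Icc 1 L, (2:ℝ) ^ l * u ^ (L - l) ≤ 2 ^ L * (1 - u / 2)⁻¹ := by
  have key : ∀ l ∈ Finset.Icc 1 L, (2:ℝ) ^ l * u ^ (L - l) = 2 ^ L * (u/2) ^ (L - l) := by
    intro l hl
    rw [Finset.mem_Icc] at hl
    have hlL : l + (L - l) = L := by omega
    have h2 : ((2:ℝ)) ^ (L - l) ≠ 0 := by positivity
    rw [div_pow, show (2:ℝ)^L = 2^l * 2^(L-l) by rw [← pow_add, hlL]]
    field_simp
  rw [Finset.sum_congr rfl key, ← Finset.mul_sum]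
  have h2 : ∑ l ∈ Finset.Icc 1 L, (u/2) ^ (L - l) ≤ (1 - u/2)⁻¹ := by
    have : ∑ l ∈ Finset.Icc 1 L, (u/2) ^ (L - l) = ∑ j ∈ Finset.range L, (u/2) ^ j := by
      refine Finset.sum_nbij' (fun l => L - l) (fun j => L - j) ?_ ?_ ?_ ?_ ?_ <;>
        · intro a ha
          first
          | (simp only [Finset.mem_Icc, Finset.mem_range] at ha ⊢; omega)
          | rfl
    rw [this]
    exact geom_aux _ (by linarith) (by linarith) L
  calc (2:ℝ)^L * ∑ l ∈ Finset.Icc 1 L, (u/2) ^ (L - l)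
      ≤ 2^L * (1 - u/2)⁻¹ := by
        apply mul_le_mul_of_nonneg_left h2 (by positivity)

/-- O(N) complexity of spaLU: Let `0 < q < 2^{-1/3}`, `σ ≥ 0`, `M ≥ 0`. Then
there is a constant `C` (depending only on `q`, `σ`, `M`) such that for every positive integer
`L` and every sequence of nonnegative reals `e` with `e L ≤ M` satisfying the two-level
sparsity recurrences `e (L-2i) ≤ 2q·e (L-2i+2) + 2σ` and `e (L-2i+1) ≤ e (L-2i)` for all
admissible `i ≥ 1` (those with `2i ≤ L`, so that in particular `e (L-1) ≤ e (L-2)`), one has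
`Σ_{l=1}^{L} 2^l·(e l)³ ≤ C·2^L` and `Σ_{l=1}^{L} 2^l·(e l)² ≤ C·2^L`. -/
theorem stmt14 (q σ M : ℝ) (hq0 : 0 < q) (hq1 : q < (2 : ℝ) ^ (-(1 / 3) : ℝ))
    (hσ : 0 ≤ σ) (hM : 0 ≤ M) :
    ∃ C : ℝ, ∀ L : ℕ, 0 < L → ∀ e : ℕ → ℝ,
      (∀ l, 0 ≤ e l) → e L ≤ M →
      (∀ i : ℕ, 1 ≤ i → 2 * i ≤ L →
        e (L - 2 * i) ≤ 2 * q * e (L - 2 * i + 2) + 2 * σ ∧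
        e (L - 2 * i + 1) ≤ e (L - 2 * i)) →
      (∑ l ∈ Finset.Icc 1 L, (2 : ℝ) ^ l * (e l) ^ 3 ≤ C * 2 ^ L ∧
       ∑ l ∈ Finset.Icc 1 L, (2 : ℝ) ^ l * (e l) ^ 2 ≤ C * 2 ^ L) := by
  set x : ℝ := (2:ℝ) ^ ((2:ℝ)/3) with hx
  have hx1 : (1:ℝ) < x := (Real.one_lt_rpow_iff_of_pos (by norm_num)).mpr (Or.inl ⟨by norm_num, by norm_num⟩)
  have hxeq : x = 2 * (2:ℝ) ^ (-(1/3) : ℝ) := by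
    rw [hx, show ((2:ℝ)/3) = 1 + (-(1/3)) by norm_num, Real.rpow_add (by norm_num), Real.rpow_one]
  have hx2 : x < 2 := by
    rw [hx]
    calc (2:ℝ) ^ ((2:ℝ)/3) < 2 ^ (1:ℝ) :=
          Real.rpow_lt_rpow_of_exponent_lt (by norm_num) (by norm_num)
      _ = 2 := Real.rpow_one 2
  have hx3 : x ^ 3 = 4 := by
    rw [hx, ← Real.rpow_natCast ((2:ℝ) ^ ((2:ℝ)/3)) 3,
      ← Real.rpow_mul (by norm_num : (0:ℝ) ≤ 2),
      show ((2:ℝ)/3 * ((3:ℕ):ℝ)) = ((2:ℕ):ℝ) by push_cast; ring, Real.rpow_natCast]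
    norm_num
  set s : ℝ := max (2*q) ((1 + x)/2) with hs
  have hs1 : 1 < s := lt_of_lt_of_le (by linarith) (le_max_right _ _)
  have hs0 : 0 < s := by linarith
  have hsx : s < x := by
    apply max_lt _ (by linarith)
    rw [hxeq]; linarith
  have hs2q : 2 * q ≤ s := le_max_left _ _
  set t : ℝ := Real.sqrt s with ht
  have ht0 : 0 ≤ t := Real.sqrt_nonneg s
  have ht1 : 1 ≤ t := Real.one_le_sqrt.mpr hs1.le
  have ht2 : t ^ 2 = s := Real.sq_sqrt hs0.le
  have ht2lt : t ^ 2 < 2 := by rw [ht2]; linarith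
  have ht3lt : t ^ 3 < 2 := by
    have h6 : (t ^ 3) ^ 2 < 2 ^ 2 := by
      have : (t ^ 3) ^ 2 = (t ^ 2) ^ 3 := by ring
      rw [this, ht2]
      have := pow_lt_pow_left₀ hsx hs0.le (n := 3) (by norm_num)
      rw [hx3] at this; nlinarith
    exact lt_of_pow_lt_pow_left₀ 2 (by norm_num) h6
  set B : ℝ := 2 * σ / (s - 1) with hB
  have hB0 : 0 ≤ B := div_nonneg (by linarith) (by linarith)
  have hBs : B * (s - 1) = 2 * σ := by
    rw [hB, div_mul_cancel₀ _ (by linarith : s - 1 ≠ 0)]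
  set A : ℝ := M + B with hA
  have hA0 : 0 ≤ A := by positivity
  refine ⟨A^3 * t^3 * (1 - t^3/2)⁻¹ + A^2 * t^2 * (1 - t^2/2)⁻¹, ?_⟩
  intro L hL e he heL hrec
  -- even-level bound
  have even_bd : ∀ i : ℕ, 2 * i ≤ L → e (L - 2 * i) ≤ s ^ i * A - B := by
    intro i
    induction i with
    | zero => intro _; simpa [hA] using heL
    | succ i ih =>
      intro hiL
      have hiL' : 2 * i ≤ L := by omega
      have hIH := ih hiL'
      obtain ⟨h1, _⟩ := hrec (i + 1) (by omega) hiL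
      have hidx : L - 2 * (i + 1) + 2 = L - 2 * i := by omega
      rw [hidx] at h1
      have hnn : 0 ≤ e (L - 2 * i) := he _
      have step1 : 2 * q * e (L - 2 * i) ≤ s * (s ^ i * A - B) := by
        calc 2 * q * e (L - 2 * i) ≤ s * e (L - 2 * i) :=
              mul_le_mul_of_nonneg_right hs2q hnn
          _ ≤ s * (s ^ i * A - B) := mul_le_mul_of_nonneg_left hIH hs0.le
      have : s ^ (i + 1) * A - B = s * (s ^ i * A - B) + B * (s - 1) := by ring
      rw [this, hBs]
      linarith
  -- pointwise bound
  have ptwise : ∀ l, 1 ≤ l → l ≤ L → e l ≤ A * t ^ (L - l + 1) := by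
    intro l hl1 hlL
    have hAt : ∀ i k : ℕ, 2 * i ≤ k + 1 → s ^ i * A ≤ A * t ^ (k + 1) := by
      intro i k hik
      calc s ^ i * A = A * (t ^ 2) ^ i := by rw [ht2]; ring
        _ = A * t ^ (2 * i) := by rw [← pow_mul]
        _ ≤ A * t ^ (k + 1) := by
            apply mul_le_mul_of_nonneg_left _ hA0
            exact pow_le_pow_right₀ ht1 hik
    rcases Nat.even_or_odd (L - l) with ⟨i, hi⟩ | ⟨i, hi⟩
    · have hil : l = L - 2 * i := by omega
      have h2i : 2 * i ≤ L := by omega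
      calc e l ≤ s ^ i * A - B := by rw [hil]; exact even_bd i h2i
        _ ≤ s ^ i * A := by linarith
        _ ≤ A * t ^ (L - l + 1) := hAt i (L - l) (by omega)
    · -- L - l = 2i+1, so l = L - 2(i+1) + 1
      have h2i : 2 * (i + 1) ≤ L := by omega
      obtain ⟨_, h2⟩ := hrec (i + 1) (by omega) h2i
      have hil : l = L - 2 * (i + 1) + 1 := by omega
      calc e l ≤ e (L - 2 * (i + 1)) := by rw [hil]; exact h2
        _ ≤ s ^ (i + 1) * A - B := even_bd (i + 1) h2i
        _ ≤ s ^ (i + 1) * A := by linarith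
        _ ≤ A * t ^ (L - l + 1) := hAt (i + 1) (L - l) (by omega)
  -- sum bounds
  have main : ∀ p : ℕ, t ^ p < 2 → ∑ l ∈ Finset.Icc 1 L, (2:ℝ) ^ l * (e l) ^ p ≤
      A ^ p * t ^ p * (1 - t ^ p / 2)⁻¹ * 2 ^ L := by
    intro p htp2
    have htp0 : 0 ≤ t ^ p := pow_nonneg ht0 p
    have step : ∑ l ∈ Finset.Icc 1 L, (2:ℝ) ^ l * (e l) ^ p ≤
        ∑ l ∈ Finset.Icc 1 L, (2:ℝ) ^ l * (A ^ p * t ^ p * (t ^ p) ^ (L - l)) := by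
      apply Finset.sum_le_sum
      intro l hl
      rw [Finset.mem_Icc] at hl
      apply mul_le_mul_of_nonneg_left _ (by positivity)
      calc (e l) ^ p ≤ (A * t ^ (L - l + 1)) ^ p :=
            pow_le_pow_left₀ (he l) (ptwise l hl.1 hl.2) p
        _ = A ^ p * (t ^ (L - l + 1)) ^ p := mul_pow _ _ _
        _ = A ^ p * t ^ p * (t ^ p) ^ (L - l) := by
            rw [mul_assoc, ← pow_mul, ← pow_mul, ← pow_add]
            congr 2
            ring
    refine step.trans ?_
    have : ∑ l ∈ Finset.Icc 1 L, (2:ℝ) ^ l * (A ^ p * t ^ p * (t ^ p) ^ (L - l)) =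
        A ^ p * t ^ p * ∑ l ∈ Finset.Icc 1 L, (2:ℝ) ^ l * (t ^ p) ^ (L - l) := by
      rw [Finset.mul_sum]; apply Finset.sum_congr rfl; intros; ring
    rw [this]
    calc A ^ p * t ^ p * ∑ l ∈ Finset.Icc 1 L, (2:ℝ) ^ l * (t ^ p) ^ (L - l)
        ≤ A ^ p * t ^ p * (2 ^ L * (1 - t ^ p / 2)⁻¹) :=
          mul_le_mul_of_nonneg_left (sum_aux _ htp0 htp2 L) (by positivity)
      _ = A ^ p * t ^ p * (1 - t ^ p / 2)⁻¹ * 2 ^ L := by ring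
  have hinv3 : 0 ≤ (1 - t^3/2)⁻¹ := by
    apply inv_nonneg.mpr; linarith
  have hinv2 : 0 ≤ (1 - t^2/2)⁻¹ := by
    apply inv_nonneg.mpr; linarith
  constructor
  · calc ∑ l ∈ Finset.Icc 1 L, (2:ℝ) ^ l * (e l) ^ 3
        ≤ A ^ 3 * t ^ 3 * (1 - t ^ 3 / 2)⁻¹ * 2 ^ L := main 3 ht3lt
      _ ≤ (A^3 * t^3 * (1 - t^3/2)⁻¹ + A^2 * t^2 * (1 - t^2/2)⁻¹) * 2 ^ L := by
          rw [add_mul]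
          have h := mul_nonneg (by positivity : (0:ℝ) ≤ A^2 * t^2 * (1 - t^2/2)⁻¹)
            (pow_nonneg (by norm_num : (0:ℝ) ≤ 2) L)
          linarith
  · calc ∑ l ∈ Finset.Icc 1 L, (2:ℝ) ^ l * (e l) ^ 2
        ≤ A ^ 2 * t ^ 2 * (1 - t ^ 2 / 2)⁻¹ * 2 ^ L := main 2 ht2lt
      _ ≤ (A^3 * t^3 * (1 - t^3/2)⁻¹ + A^2 * t^2 * (1 - t^2/2)⁻¹) * 2 ^ L := by
          rw [add_mul]
          have h := mul_nonneg (by positivity : (0:ℝ) ≤ A^3 * t^3 * (1 - t^3/2)⁻¹)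
            (pow_nonneg (by norm_num : (0:ℝ) ≤ 2) L)
          linarith
end
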